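/- The number of labelled trees on n vertices (n ≥ 1) is n^(n-2) (Cayley's formula). -/

import Mathlib

open Function

namespace Cayley

variable {α : Type*} [Finite α] {f : α → α}
set_option linter.unusedSectionVars false

/-- periodic points -/
def per (f : α → α) : Set α := {x | ∃ k, 0 < k ∧ f^[k] x = x}

lemma per_apply {x : α} (hx : x ∈ per f) : f x ∈ per f := by
  obtain ⟨k, hk, hfk⟩ := hx
  exact ⟨k, hk, by rw [← Function.iterate_succ_apply, Function.iterate_succ_apply', hfk]⟩

lemma per_iterate {x : α} (hx : x ∈ per f) (m : ℕ) : f^[m] x ∈ per f := by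
  induction m with
  | zero => exact hx
  | succ m ih => rw [Function.iterate_succ_apply']; exact per_apply ih

lemma iterate_per_self {x : α} {k t : ℕ} (h : f^[k] x = x) : f^[k * t] x = x := by
  rw [Function.iterate_mul]
  induction t with
  | zero => rfl
  | succ t ih => rw [Function.iterate_succ_apply', ih, h]

lemma exists_iterate_mem_per (x : α) : ∃ m, f^[m] x ∈ per f := by
  have : ¬ Function.Injective (fun i : ℕ => f^[i] x) := fun h => Set.not_injOn_infinite_finite_image
    (Set.infinite_univ) (Set.toFinite _) (h.injOn)
  rw [Function.not_injective_iff] at this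
  obtain ⟨i, j, hij, hne⟩ := this
  rcases Nat.lt_or_ge i j with h | h
  · refine ⟨i, j - i, by omega, ?_⟩
    rw [← Function.iterate_add_apply]
    have : j - i + i = j := by omega
    rw [this]; exact hij.symm
  · have h' : j < i := by omega
    refine ⟨j, i - j, by omega, ?_⟩
    rw [← Function.iterate_add_apply]
    have : i - j + j = i := by omega
    rw [this]; exact hij

lemma per_injOn : Set.InjOn f (per f) := by
  rintro x ⟨k, hk, hkx⟩ y ⟨l, hl, hly⟩ hfxy
  have hx : f^[k * l] x = x := iterate_per_self hkx
  have hy : f^[l * k] y = y := iterate_per_self hly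
  have hkl : 0 < k * l := Nat.mul_pos hk hl
  have heq : f^[k * l] x = f^[k * l] y := by
    obtain ⟨m, hm⟩ : ∃ m, k * l = m + 1 := ⟨k * l - 1, by omega⟩
    rw [hm, Function.iterate_succ_apply, Function.iterate_succ_apply, hfxy]
  rw [mul_comm] at hy
  rw [hx, hy] at heq
  exact heq

lemma per_surjOn : ∀ y ∈ per f, ∃ x ∈ per f, f x = y := by
  rintro y ⟨k, hk, hky⟩
  refine ⟨f^[k-1] y, per_iterate ⟨k, hk, hky⟩ _, ?_⟩
  have h1 : f (f^[k-1] y) = f^[(k-1)+1] y := (Function.iterate_succ_apply' f (k-1) y).symm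
  have h2 : k - 1 + 1 = k := by omega
  rw [h1, h2]; exact hky

variable {p : α → α} {b : α}

/-- `p` is a parent map rooted at `b`. -/
def RootedAt (b : α) (p : α → α) : Prop := p b = b ∧ ∀ v, ∃ m, p^[m] v = b

lemma RootedAt.iterate_root (h : RootedAt b p) (m : ℕ) : p^[m] b = b := by
  induction m with
  | zero => rfl
  | succ m ih => rw [Function.iterate_succ_apply', ih, h.1]

lemma RootedAt.iterate_eq_root_of_le (h : RootedAt b p) {v : α} {m m' : ℕ}
    (hm : p^[m] v = b) (hle : m ≤ m') : p^[m'] v = b := by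
  have : m' - m + m = m' := by omega
  rw [← this, Function.iterate_add_apply, hm, h.iterate_root]

/-- A point that is periodic and reaches the root equals the root. -/
lemma RootedAt.per_eq_root (h : RootedAt b p) {x : α} {k : ℕ} (hk : 0 < k)
    (hx : p^[k] x = x) {m : ℕ} (hm : p^[m] x = b) : x = b := by
  have h1 : p^[k * (m + 1)] x = x := iterate_per_self hx
  have h2 : p^[k * (m + 1)] x = b := h.iterate_eq_root_of_le hm (by nlinarith)
  rw [h1] at h2; exact h2

/-- Orbit injectivity up to first hit of the root. -/
lemma orbit_injOn (h : RootedAt b p) {a : α} {m : ℕ} (hm : p^[m] a = b)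
    (hmin : ∀ j < m, p^[j] a ≠ b) {i j : ℕ} (hij : i < j) (hjm : j ≤ m) :
    p^[i] a ≠ p^[j] a := by
  intro heq
  -- shift: for r ≥ i, p^[r + (j - i)] a = p^[r] a
  have shift : ∀ s : ℕ, p^[(i + s) + (j - i)] a = p^[i + s] a := by
    intro s
    have e1 : (i + s) + (j - i) = s + j := by omega
    have e2 : i + s = s + i := by omega
    rw [e1, e2, Function.iterate_add_apply, Function.iterate_add_apply, heq]
  have hri : m - (j - i) ≥ i := by omega
  obtain ⟨s, hs⟩ : ∃ s, m - (j - i) = i + s := ⟨m - (j - i) - i, by omega⟩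
  have : p^[(i + s) + (j - i)] a = p^[i + s] a := shift s
  have hms : (i + s) + (j - i) = m := by omega
  rw [hms] at this
  exact hmin (i + s) (by omega) (by rw [← this, hm])

/-- If `g` maps `S` into `S` injectively, every point of `S` is `g`-periodic. -/
lemma mem_per_of_injOn {g : α → α} {S : Set α} (hfin : S.Finite)
    (hmaps : Set.MapsTo g S S) (hinj : Set.InjOn g S) {x : α} (hx : x ∈ S) :
    x ∈ per g := by
  have hiter : ∀ i, g^[i] x ∈ S := fun i => by
    induction i with
    | zero => exact hx
    | succ i ih => rw [Function.iterate_succ_apply']; exact hmaps ih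
  haveI := hfin.to_subtype
  obtain ⟨i, j, hne, hij⟩ := Finite.exists_ne_map_eq_of_infinite
    (fun i : ℕ => (⟨g^[i] x, hiter i⟩ : S))
  have hij2 : g^[i] x = g^[j] x := congrArg Subtype.val hij
  -- cancel: g^[i] x = g^[j] x → x = g^[j - i] x
  have cancel : ∀ i j : ℕ, i ≤ j → g^[i] x = g^[j] x → x = g^[j - i] x := by
    intro i
    induction i with
    | zero => intro j _ h; simpa using h
    | succ i ih =>
      intro j hj h
      obtain ⟨j', rfl⟩ : ∃ j', j = j' + 1 := ⟨j - 1, by omega⟩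
      rw [Function.iterate_succ_apply', Function.iterate_succ_apply'] at h
      have := hinj (hiter i) (hiter j') h
      have := ih j' (by omega) this
      simpa [Nat.succ_sub_succ] using this
  rcases Nat.lt_or_ge i j with hlt | hge
  · exact ⟨j - i, by omega, (cancel i j (by omega) hij2).symm⟩
  · have hlt : j < i := by omega
    exact ⟨i - j, by omega, (cancel j i (by omega) hij2.symm).symm⟩

section Joyal
variable {n : ℕ}

noncomputable def perF (f : Fin n → Fin n) : Finset (Fin n) := (Set.toFinite (per f)).toFinset

lemma mem_perF {f : Fin n → Fin n} {x : Fin n} : x ∈ perF f ↔ x ∈ per f :=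
  Set.Finite.mem_toFinset _

noncomputable def kk (f : Fin n → Fin n) : ℕ := (perF f).card

lemma kk_pos [NeZero n] (f : Fin n → Fin n) : 0 < kk f := by
  obtain ⟨m, hm⟩ := exists_iterate_mem_per (f := f) ⟨0, Nat.pos_of_ne_zero (NeZero.ne n)⟩
  exact Finset.card_pos.2 ⟨_, mem_perF.2 hm⟩

noncomputable def cc (f : Fin n → Fin n) : Fin (kk f) ≃o {x : Fin n // x ∈ perF f} :=
  (perF f).orderIsoOfFin rfl

noncomputable def ww (f : Fin n → Fin n) (i : Fin (kk f)) : Fin n := f (cc f i)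

lemma ww_mem {f : Fin n → Fin n} (i : Fin (kk f)) : ww f i ∈ perF f :=
  mem_perF.2 (per_apply (mem_perF.1 (cc f i).2))

lemma ww_inj {f : Fin n → Fin n} : Function.Injective (ww f) := by
  intro i j hij
  have := per_injOn (mem_perF.1 (cc f i).2) (mem_perF.1 (cc f j).2) hij
  exact (cc f).injective (Subtype.ext this)

lemma ww_surj {f : Fin n → Fin n} {v : Fin n} (hv : v ∈ perF f) : ∃ i, ww f i = v := by
  obtain ⟨x, hx, hfx⟩ := per_surjOn v (mem_perF.1 hv)
  obtain ⟨i, hi⟩ := (cc f).surjective ⟨x, mem_perF.2 hx⟩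
  exact ⟨i, by rw [ww, hi]; exact hfx⟩

noncomputable def wEquiv (f : Fin n → Fin n) : Fin (kk f) ≃ {x : Fin n // x ∈ perF f} :=
  Equiv.ofBijective (fun i => ⟨ww f i, ww_mem i⟩)
    ⟨fun i j h => ww_inj (congrArg Subtype.val h),
     fun ⟨v, hv⟩ => by obtain ⟨i, hi⟩ := ww_surj hv; exact ⟨i, Subtype.ext hi⟩⟩

noncomputable def pmap (f : Fin n → Fin n) : Fin n → Fin n := fun v =>
  if h : v ∈ perF f then
    if hlt : (((wEquiv f).symm ⟨v, h⟩ : Fin (kk f)) : ℕ) + 1 < kk f then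
      ww f ⟨(((wEquiv f).symm ⟨v, h⟩ : Fin (kk f)) : ℕ) + 1, hlt⟩
    else v
  else f v

lemma pmap_of_not_mem {f : Fin n → Fin n} {v : Fin n} (h : v ∉ perF f) : pmap f v = f v :=
  dif_neg h

lemma pmap_ww {f : Fin n → Fin n} (i : Fin (kk f)) :
    pmap f (ww f i) =
      if hlt : (i : ℕ) + 1 < kk f then ww f ⟨(i : ℕ) + 1, hlt⟩ else ww f i := by
  have hmem := ww_mem i
  have hsymm : (wEquiv f).symm ⟨ww f i, hmem⟩ = i := by
    rw [Equiv.symm_apply_eq]; rfl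
  rw [pmap, dif_pos hmem, hsymm]

noncomputable def aF [NeZero n] (f : Fin n → Fin n) : Fin n := ww f ⟨0, kk_pos f⟩

noncomputable def bF [NeZero n] (f : Fin n → Fin n) : Fin n :=
  ww f ⟨kk f - 1, by have := kk_pos f; omega⟩

lemma pmap_chain [NeZero n] {f : Fin n → Fin n} (d : ℕ) (i : Fin (kk f))
    (hd : (i : ℕ) + d = kk f - 1) : (pmap f)^[d] (ww f i) = bF f := by
  induction d generalizing i with
  | zero =>
    have : i = (⟨kk f - 1, by have := kk_pos f; omega⟩ : Fin (kk f)) := by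
      apply Fin.ext; simpa using hd
    rw [Function.iterate_zero_apply, this]; rfl
  | succ d ih =>
    have hlt : (i : ℕ) + 1 < kk f := by have := kk_pos f; omega
    rw [Function.iterate_succ_apply, pmap_ww, dif_pos hlt]
    exact ih ⟨(i : ℕ) + 1, hlt⟩ (by simpa using by omega)

lemma pmap_root [NeZero n] (f : Fin n → Fin n) : pmap f (bF f) = bF f := by
  rw [bF, pmap_ww]
  have : ¬ ((kk f - 1 : ℕ) + 1 < kk f) := by have := kk_pos f; omega
  rw [dif_neg]
  simpa using this

lemma pmap_agrees {f : Fin n → Fin n} {v : Fin n} {j : ℕ}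
    (hj : ∀ i < j, f^[i] v ∉ per f) : (pmap f)^[j] v = f^[j] v := by
  induction j with
  | zero => rfl
  | succ j ih =>
    have ihj : (pmap f)^[j] v = f^[j] v := ih (fun i hi => hj i (by omega))
    rw [Function.iterate_succ_apply', Function.iterate_succ_apply', ihj,
      pmap_of_not_mem (fun h => hj j (by omega) (mem_perF.1 h))]

lemma pmap_rooted [NeZero n] (f : Fin n → Fin n) : RootedAt (bF f) (pmap f) := by
  classical
  refine ⟨pmap_root f, fun v => ?_⟩
  have hex := exists_iterate_mem_per (f := f) v
  set m := Nat.find hex with hm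
  have hmem : f^[m] v ∈ per f := Nat.find_spec hex
  have hmin : ∀ i < m, f^[i] v ∉ per f := fun i hi => Nat.find_min hex hi
  have h1 : (pmap f)^[m] v = f^[m] v := pmap_agrees hmin
  obtain ⟨i, hi⟩ := ww_surj (mem_perF.2 hmem)
  refine ⟨(kk f - 1 - (i : ℕ)) + m, ?_⟩
  rw [Function.iterate_add_apply, h1, ← hi]
  exact pmap_chain _ i (by omega)

end Joyal

section Inverse
variable {n : ℕ}

open Classical in
noncomputable def mm (a b : Fin n) (p : Fin n → Fin n) : ℕ :=
  if h : ∃ j, p^[j] a = b then Nat.find h else 0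

noncomputable def SS (a b : Fin n) (p : Fin n → Fin n) : Finset (Fin n) :=
  Finset.image (fun j : Fin (mm a b p + 1) => p^[(j : ℕ)] a) Finset.univ

lemma mem_SS {a b : Fin n} {p : Fin n → Fin n} {x : Fin n} :
    x ∈ SS a b p ↔ ∃ j ≤ mm a b p, p^[j] a = x := by
  simp only [SS, Finset.mem_image, Finset.mem_univ, true_and]
  constructor
  · rintro ⟨j, hj⟩; exact ⟨(j : ℕ), by omega, hj⟩
  · rintro ⟨j, hj, hjx⟩; exact ⟨⟨j, by omega⟩, hjx⟩

noncomputable def gmap (a b : Fin n) (p : Fin n → Fin n) : Fin n → Fin n := fun v =>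
  if h : v ∈ SS a b p then
    p^[((((SS a b p).orderIsoOfFin rfl).symm ⟨v, h⟩ : Fin (SS a b p).card) : ℕ)] a
  else p v

lemma gmap_of_not_mem {a b : Fin n} {p : Fin n → Fin n} {v : Fin n} (h : v ∉ SS a b p) :
    gmap a b p v = p v := dif_neg h

lemma gmap_of_mem {a b : Fin n} {p : Fin n → Fin n} {v : Fin n} (h : v ∈ SS a b p) :
    gmap a b p v =
      p^[((((SS a b p).orderIsoOfFin rfl).symm ⟨v, h⟩ : Fin (SS a b p).card) : ℕ)] a :=
  dif_pos h

lemma orderIsoOfFin_symm_congr {s t : Finset (Fin n)} (hst : s = t) {x : Fin n} (hx : x ∈ s) :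
    (((s.orderIsoOfFin rfl).symm ⟨x, hx⟩ : Fin s.card) : ℕ)
      = (((t.orderIsoOfFin rfl).symm ⟨x, hst ▸ hx⟩ : Fin t.card) : ℕ) := by
  subst hst; rfl

end Inverse

section RT1
variable {n : ℕ} [NeZero n] (f : Fin n → Fin n)

lemma ww_orbit (j : ℕ) (hj : j ≤ kk f - 1) :
    (pmap f)^[j] (aF f) = ww f ⟨j, by have := kk_pos f; omega⟩ := by
  induction j with
  | zero => rfl
  | succ j ih =>
    have hlt : j + 1 < kk f := by have := kk_pos f; omega
    rw [Function.iterate_succ_apply', ih (by omega), pmap_ww, dif_pos hlt]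

lemma pmap_reaches : (pmap f)^[kk f - 1] (aF f) = bF f := by
  rw [ww_orbit f _ le_rfl]; rfl

lemma mm_pmap : mm (aF f) (bF f) (pmap f) = kk f - 1 := by
  classical
  have hex : ∃ j, (pmap f)^[j] (aF f) = bF f := ⟨kk f - 1, pmap_reaches f⟩
  rw [mm, dif_pos hex]
  rw [Nat.find_eq_iff]
  refine ⟨pmap_reaches f, fun j hj => ?_⟩
  rw [ww_orbit f j (by omega)]
  intro h
  have := ww_inj h
  have : j = kk f - 1 := by simpa [Fin.ext_iff] using this
  omega

lemma SS_pmap : SS (aF f) (bF f) (pmap f) = perF f := by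
  ext x
  rw [mem_SS, mm_pmap]
  constructor
  · rintro ⟨j, hj, rfl⟩
    rw [ww_orbit f j hj]; exact ww_mem _
  · intro hx
    obtain ⟨i, hi⟩ := ww_surj hx
    refine ⟨(i : ℕ), by have := i.isLt; omega, ?_⟩
    rw [ww_orbit f _ (by have := i.isLt; omega)]
    have : (⟨(i : ℕ), by have := i.isLt; omega⟩ : Fin (kk f)) = i := Fin.ext rfl
    rw [this]; exact hi

lemma roundtrip1 : gmap (aF f) (bF f) (pmap f) = f := by
  funext v
  by_cases hv : v ∈ perF f
  · have hvS : v ∈ SS (aF f) (bF f) (pmap f) := by rw [SS_pmap]; exact hv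
    rw [gmap_of_mem hvS]
    have hcongr := orderIsoOfFin_symm_congr (SS_pmap f) hvS
    rw [hcongr]
    set i : Fin (perF f).card := ((perF f).orderIsoOfFin rfl).symm ⟨v, SS_pmap f ▸ hvS⟩ with hi
    have hile : (i : ℕ) ≤ kk f - 1 := by have := i.isLt; have : (i:ℕ) < kk f := this; omega
    rw [ww_orbit f _ hile]
    show f _ = f v
    congr 1
    have : cc f ⟨(i : ℕ), by have := i.isLt; exact this⟩ = ⟨v, SS_pmap f ▸ hvS⟩ := by
      rw [cc]
      have : (⟨(i : ℕ), i.isLt⟩ : Fin (perF f).card) = i := by apply Fin.ext; rfl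
      rw [show (⟨(i : ℕ), _⟩ : Fin (kk f)) = i from Fin.ext rfl, hi]
      exact OrderIso.apply_symm_apply _ _
    exact congrArg Subtype.val this
  · have hvS : v ∉ SS (aF f) (bF f) (pmap f) := by rw [SS_pmap]; exact hv
    rw [gmap_of_not_mem hvS, pmap_of_not_mem hv]

end RT1

section RT2
variable {n : ℕ} (a b : Fin n) (p : Fin n → Fin n)

lemma mm_spec (hR : RootedAt b p) :
    p^[mm a b p] a = b ∧ ∀ j < mm a b p, p^[j] a ≠ b := by
  classical
  rw [mm, dif_pos (hR.2 a)]
  exact ⟨Nat.find_spec (hR.2 a), fun j hj => Nat.find_min (hR.2 a) hj⟩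

lemma u_inj (hR : RootedAt b p) {i j : ℕ} (hi : i ≤ mm a b p) (hj : j ≤ mm a b p)
    (h : p^[i] a = p^[j] a) : i = j := by
  by_contra hne
  rcases Nat.lt_or_ge i j with hlt | hge
  · exact orbit_injOn hR (mm_spec a b p hR).1 (mm_spec a b p hR).2 hlt hj h
  · exact orbit_injOn hR (mm_spec a b p hR).1 (mm_spec a b p hR).2 (by omega : j < i) hi h.symm

lemma card_SS (hR : RootedAt b p) : (SS a b p).card = mm a b p + 1 := by
  rw [SS, Finset.card_image_of_injective _ (fun i j hij => ?_), Finset.card_univ,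
    Fintype.card_fin]
  exact Fin.ext (u_inj a b p hR (by omega) (by omega) hij)

lemma b_mem_SS (hR : RootedAt b p) : b ∈ SS a b p :=
  mem_SS.2 ⟨mm a b p, le_rfl, (mm_spec a b p hR).1⟩

lemma gmap_mem_SS (hR : RootedAt b p) {v : Fin n} (hv : v ∈ SS a b p) :
    gmap a b p v ∈ SS a b p := by
  rw [gmap_of_mem hv]
  refine mem_SS.2 ⟨_, ?_, rfl⟩
  have h1 := (((SS a b p).orderIsoOfFin rfl).symm ⟨v, hv⟩).isLt
  have h2 := card_SS a b p hR
  omega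

lemma gmap_iterate_mem (hR : RootedAt b p) {v : Fin n} (hv : v ∈ SS a b p) (i : ℕ) :
    (gmap a b p)^[i] v ∈ SS a b p := by
  induction i with
  | zero => exact hv
  | succ i ih => rw [Function.iterate_succ_apply']; exact gmap_mem_SS a b p hR ih

lemma gmap_injOn (hR : RootedAt b p) : Set.InjOn (gmap a b p) ↑(SS a b p) := by
  intro v hv v' hv' h
  rw [Finset.mem_coe] at hv hv'
  rw [gmap_of_mem hv, gmap_of_mem hv'] at h
  have hle : ∀ (x : Fin n) (hx : x ∈ SS a b p),
      ((((SS a b p).orderIsoOfFin rfl).symm ⟨x, hx⟩ : Fin (SS a b p).card) : ℕ) ≤ mm a b p := by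
    intro x hx
    have h1 := (((SS a b p).orderIsoOfFin rfl).symm ⟨x, hx⟩).isLt
    have h2 := card_SS a b p hR
    omega
  have := u_inj a b p hR (hle v hv) (hle v' hv') h
  have h2 : (((SS a b p).orderIsoOfFin rfl).symm ⟨v, hv⟩)
      = (((SS a b p).orderIsoOfFin rfl).symm ⟨v', hv'⟩) := Fin.ext this
  have := congrArg ((SS a b p).orderIsoOfFin rfl) h2
  rw [OrderIso.apply_symm_apply, OrderIso.apply_symm_apply] at this
  exact congrArg Subtype.val this

lemma per_gmap (hR : RootedAt b p) : per (gmap a b p) = ↑(SS a b p) := by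
  apply Set.Subset.antisymm
  · intro v hv
    by_contra hvS
    obtain ⟨t, ht, htv⟩ := hv
    have hall : ∀ i, (gmap a b p)^[i] v ∉ SS a b p := by
      intro i hi
      have h1 : (gmap a b p)^[t * (i + 1)] v = v := iterate_per_self htv
      have h2 : t * (i + 1) - i + i = t * (i + 1) := by
        have := Nat.le_mul_of_pos_left (i + 1) ht
        omega
      have h3 : (gmap a b p)^[t * (i + 1)] v ∈ SS a b p := by
        rw [← h2, Function.iterate_add_apply]
        exact gmap_iterate_mem a b p hR hi _
      rw [h1] at h3
      exact hvS h3
    have agree : ∀ i, (gmap a b p)^[i] v = p^[i] v := by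
      intro i
      induction i with
      | zero => rfl
      | succ i ih =>
        rw [Function.iterate_succ_apply', Function.iterate_succ_apply', ← ih,
          gmap_of_not_mem (hall i)]
    obtain ⟨r, hr⟩ := hR.2 v
    have := hall r
    rw [agree r, hr] at this
    exact this (b_mem_SS a b p hR)
  · intro v hv
    rw [Finset.mem_coe] at hv
    exact mem_per_of_injOn (Set.toFinite _)
      (fun x hx => gmap_mem_SS a b p hR (Finset.mem_coe.1 hx)) (gmap_injOn a b p hR) hv

lemma perF_gmap (hR : RootedAt b p) : perF (gmap a b p) = SS a b p := by
  ext x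
  rw [mem_perF, per_gmap a b p hR, Finset.mem_coe]

lemma kk_gmap (hR : RootedAt b p) : kk (gmap a b p) = mm a b p + 1 := by
  rw [kk, perF_gmap a b p hR, card_SS a b p hR]

lemma orderIsoOfFin_congr {s t : Finset (Fin n)} (hst : s = t) (i : Fin s.card) :
    ((s.orderIsoOfFin rfl i : {x // x ∈ s}) : Fin n)
      = ((t.orderIsoOfFin rfl (Fin.cast (congrArg Finset.card hst) i) : {x // x ∈ t}) : Fin n) := by
  subst hst; rfl

lemma ww_gmap (hR : RootedAt b p) (i : Fin (kk (gmap a b p))) :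
    ww (gmap a b p) i = p^[(i : ℕ)] a := by
  have hcard : (perF (gmap a b p)).card = (SS a b p).card :=
    congrArg Finset.card (perF_gmap a b p hR)
  set i' : Fin (SS a b p).card := Fin.cast hcard i with hi'
  have hval : ((cc (gmap a b p) i : {x // x ∈ perF (gmap a b p)}) : Fin n)
      = (((SS a b p).orderIsoOfFin rfl i' : {x // x ∈ SS a b p}) : Fin n) :=
    orderIsoOfFin_congr (perF_gmap a b p hR) i
  have hmem : ((cc (gmap a b p) i : {x // x ∈ perF (gmap a b p)}) : Fin n) ∈ SS a b p := by
    rw [hval]; exact ((SS a b p).orderIsoOfFin rfl i').2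
  rw [ww, gmap_of_mem hmem]
  congr 1
  have : (⟨((cc (gmap a b p) i : {x // x ∈ perF (gmap a b p)}) : Fin n), hmem⟩
      : {x // x ∈ SS a b p}) = (SS a b p).orderIsoOfFin rfl i' := Subtype.ext hval
  rw [this, OrderIso.symm_apply_apply]
  rfl

lemma aF_gmap [NeZero n] (hR : RootedAt b p) : aF (gmap a b p) = a := by
  rw [aF, ww_gmap a b p hR]; rfl

lemma bF_gmap [NeZero n] (hR : RootedAt b p) : bF (gmap a b p) = b := by
  rw [bF, ww_gmap a b p hR]
  have h1 : kk (gmap a b p) - 1 = mm a b p := by rw [kk_gmap a b p hR]; omega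
  show p^[kk (gmap a b p) - 1] a = b
  rw [h1]
  exact (mm_spec a b p hR).1

lemma pmap_gmap [NeZero n] (hR : RootedAt b p) : pmap (gmap a b p) = p := by
  funext v
  by_cases hv : v ∈ SS a b p
  · obtain ⟨i, hi⟩ := ww_surj (v := v) (by rw [perF_gmap a b p hR]; exact hv)
    rw [← hi, pmap_ww]
    have hiv : ww (gmap a b p) i = p^[(i : ℕ)] a := ww_gmap a b p hR i
    by_cases hlt : (i : ℕ) + 1 < kk (gmap a b p)
    · rw [dif_pos hlt, ww_gmap a b p hR, hiv]
      show p^[(i : ℕ) + 1] a = p (p^[(i : ℕ)] a)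
      rw [Function.iterate_succ_apply']
    · rw [dif_neg hlt, hiv]
      have him : (i : ℕ) = mm a b p := by
        have h1 := i.isLt
        have h2 := kk_gmap a b p hR
        omega
      have hb : p^[(i : ℕ)] a = b := by rw [him]; exact (mm_spec a b p hR).1
      rw [hb, hR.1]
  · rw [pmap_of_not_mem (by rw [perF_gmap a b p hR]; exact hv), gmap_of_not_mem hv]

end RT2

section Count
variable {n : ℕ}

noncomputable def joyalEquiv (n : ℕ) [NeZero n] :
    (Fin n → Fin n) ≃ {x : (Fin n × Fin n) × (Fin n → Fin n) // RootedAt x.1.2 x.2} where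
  toFun f := ⟨((aF f, bF f), pmap f), pmap_rooted f⟩
  invFun x := gmap x.1.1.1 x.1.1.2 x.1.2
  left_inv f := roundtrip1 f
  right_inv := by
    rintro ⟨⟨⟨a, b⟩, p⟩, hR⟩
    apply Subtype.ext
    show ((aF _, bF _), pmap _) = ((a, b), p)
    rw [aF_gmap a b p hR, bF_gmap a b p hR, pmap_gmap a b p hR]

lemma rooted_conj {α : Type*} (σ : Equiv.Perm α) {b : α} {p : α → α} (hR : RootedAt b p) :
    RootedAt (σ b) (⇑σ ∘ p ∘ ⇑σ.symm) := by
  have hit : ∀ (m : ℕ) (v : α), (⇑σ ∘ p ∘ ⇑σ.symm)^[m] v = σ (p^[m] (σ.symm v)) := by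
    intro m
    induction m with
    | zero => intro v; simp
    | succ m ih =>
      intro v
      rw [Function.iterate_succ_apply', ih, Function.iterate_succ_apply']
      simp
  constructor
  · show σ (p (σ.symm (σ b))) = σ b
    rw [Equiv.symm_apply_apply, hR.1]
  · intro v
    obtain ⟨m, hm⟩ := hR.2 (σ.symm v)
    exact ⟨m, by rw [hit m v, hm]⟩

noncomputable def rootedEquiv (n : ℕ) [NeZero n] :
    {x : (Fin n × Fin n) × (Fin n → Fin n) // RootedAt x.1.2 x.2}
      ≃ (Fin n × Fin n) × {p : Fin n → Fin n // RootedAt (0 : Fin n) p} where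
  toFun x := ((x.1.1.1, x.1.1.2),
    ⟨⇑(Equiv.swap (0 : Fin n) x.1.1.2) ∘ x.1.2 ∘ ⇑(Equiv.swap (0 : Fin n) x.1.1.2), by
      have h := rooted_conj (Equiv.swap (0 : Fin n) x.1.1.2) x.2
      rwa [Equiv.swap_apply_right, Equiv.symm_swap] at h⟩)
  invFun y := ⟨((y.1.1, y.1.2),
    ⇑(Equiv.swap (0 : Fin n) y.1.2) ∘ y.2.1 ∘ ⇑(Equiv.swap (0 : Fin n) y.1.2)), by
      have h := rooted_conj (Equiv.swap (0 : Fin n) y.1.2) y.2.2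
      rwa [Equiv.swap_apply_left, Equiv.symm_swap] at h⟩
  left_inv := by
    rintro ⟨⟨⟨a, b⟩, p⟩, hR⟩
    apply Subtype.ext
    show ((a, b), _) = ((a, b), p)
    refine congrArg _ ?_
    funext v
    simp [Equiv.swap_apply_self]
  right_inv := by
    rintro ⟨⟨a, b⟩, ⟨p, hR⟩⟩
    refine Prod.ext rfl (Subtype.ext ?_)
    funext v
    simp [Equiv.swap_apply_self]

lemma card_rootedAt_zero (n : ℕ) [NeZero n] :
    Nat.card {p : Fin n → Fin n // RootedAt (0 : Fin n) p} = n ^ (n - 2) := by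
  have h2 := Nat.card_congr ((joyalEquiv n).trans (rootedEquiv n))
  rw [Nat.card_prod, Nat.card_prod] at h2
  have hfun : Nat.card (Fin n → Fin n) = n ^ n := by
    rw [Nat.card_eq_fintype_card]; simp
  have hfin : Nat.card (Fin n) = n := by simp
  rw [hfun, hfin] at h2
  set x := Nat.card {p : Fin n → Fin n // RootedAt (0 : Fin n) p} with hx
  rcases Nat.lt_or_ge n 2 with hn | hn
  · have h1 : n = 1 := by have := NeZero.ne n; omega
    subst h1
    simpa using h2.symm
  · have hpow : n ^ n = n ^ 2 * n ^ (n - 2) := by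
      rw [← pow_add]
      congr 1
      omega
    have h3 : n ^ 2 * x = n ^ 2 * n ^ (n - 2) := by
      rw [← hpow, h2]; ring
    have hnpos : 0 < n ^ 2 := by
      have : 0 < n := Nat.pos_of_ne_zero (NeZero.ne n)
      positivity
    exact Nat.eq_of_mul_eq_mul_left hnpos h3

end Count

section Trees
open SimpleGraph
variable {n : ℕ}

def graphOf (p : Fin n → Fin n) : SimpleGraph (Fin n) :=
  SimpleGraph.fromRel (fun v w => p v = w)

lemma graphOf_adj {p : Fin n → Fin n} {v w : Fin n} :
    (graphOf p).Adj v w ↔ v ≠ w ∧ (p v = w ∨ p w = v) := by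
  simp [graphOf, SimpleGraph.fromRel_adj]

lemma RootedAt.apply_ne [NeZero n] {p : Fin n → Fin n} (hR : RootedAt (0 : Fin n) p)
    {v : Fin n} (hv : v ≠ 0) : p v ≠ v := by
  intro h
  obtain ⟨m, hm⟩ := hR.2 v
  exact hv (hR.per_eq_root (k := 1) one_pos (by simpa using h) hm)

lemma adj_parent [NeZero n] {p : Fin n → Fin n} (hR : RootedAt (0 : Fin n) p)
    {v : Fin n} (hv : v ≠ 0) : (graphOf p).Adj v (p v) :=
  graphOf_adj.2 ⟨fun h => hR.apply_ne hv h.symm, Or.inl rfl⟩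

/-- The canonical walk from `v` to the root following `p`. -/
def walkTo [NeZero n] {p : Fin n → Fin n} (hR : RootedAt (0 : Fin n) p) :
    (m : ℕ) → (v : Fin n) → p^[m] v = 0 → (graphOf p).Walk v 0
  | 0, _, h => SimpleGraph.Walk.nil.copy h.symm rfl
  | (m + 1), v, h =>
    if hv : v = 0 then SimpleGraph.Walk.nil.copy hv.symm rfl
    else SimpleGraph.Walk.cons (adj_parent hR hv)
      (walkTo hR m (p v) (by rw [← Function.iterate_succ_apply]; exact h))

lemma support_walkTo [NeZero n] {p : Fin n → Fin n} (hR : RootedAt (0 : Fin n) p) :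
    ∀ (m : ℕ) (v : Fin n) (h : p^[m] v = 0) (x : Fin n),
      x ∈ (walkTo hR m v h).support → ∃ i, p^[i] v = x := by
  intro m
  induction m with
  | zero =>
    intro v h x hx
    simp only [walkTo, SimpleGraph.Walk.support_copy, SimpleGraph.Walk.support_nil,
      List.mem_cons, List.not_mem_nil, or_false] at hx
    exact ⟨0, by
      change x ∈ ((SimpleGraph.Walk.nil : (graphOf p).Walk 0 0).copy h.symm rfl).support at hx
      simp only [SimpleGraph.Walk.support_copy, SimpleGraph.Walk.support_nil,
        List.mem_singleton] at hx
      simp_all⟩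
  | succ m ih =>
    intro v h x hx
    by_cases hv : v = 0
    · simp only [walkTo, dif_pos hv, SimpleGraph.Walk.support_copy,
        SimpleGraph.Walk.support_nil, List.mem_cons, List.not_mem_nil, or_false] at hx
      exact ⟨0, by simp [hx, hv]⟩
    · simp only [walkTo, dif_neg hv, SimpleGraph.Walk.support_cons, List.mem_cons] at hx
      rcases hx with rfl | hx
      · exact ⟨0, rfl⟩
      · obtain ⟨i, hi⟩ := ih (p v) _ x hx
        exact ⟨i + 1, by rwa [Function.iterate_succ_apply]⟩

lemma isPath_walkTo [NeZero n] {p : Fin n → Fin n} (hR : RootedAt (0 : Fin n) p) :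
    ∀ (m : ℕ) (v : Fin n) (h : p^[m] v = 0), (walkTo hR m v h).IsPath := by
  intro m
  induction m with
  | zero =>
    intro v h
    show ((SimpleGraph.Walk.nil : (graphOf p).Walk 0 0).copy h.symm rfl).IsPath
    rw [SimpleGraph.Walk.isPath_copy]
    exact SimpleGraph.Walk.IsPath.nil
  | succ m ih =>
    intro v h
    by_cases hv : v = 0
    · simp [walkTo, dif_pos hv]
    · rw [walkTo, dif_neg hv, SimpleGraph.Walk.cons_isPath_iff]
      refine ⟨ih _ _, fun hmem => ?_⟩
      obtain ⟨i, hi⟩ := support_walkTo hR m (p v) _ v hmem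
      have : p^[i + 1] v = v := by rwa [Function.iterate_succ_apply]
      obtain ⟨r, hr⟩ := hR.2 v
      exact hv (hR.per_eq_root (by omega : 0 < i + 1) this hr)

lemma getVert1_walkTo [NeZero n] {p : Fin n → Fin n} (hR : RootedAt (0 : Fin n) p)
    (m : ℕ) (v : Fin n) (h : p^[m + 1] v = 0) (hv : v ≠ 0) :
    (walkTo hR (m + 1) v h).getVert 1 = p v := by
  rw [walkTo, dif_neg hv, SimpleGraph.Walk.getVert_cons_succ, SimpleGraph.Walk.getVert_zero]

lemma connected_graphOf [NeZero n] {p : Fin n → Fin n} (hR : RootedAt (0 : Fin n) p) :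
    (graphOf p).Connected := by
  rw [SimpleGraph.connected_iff]
  refine ⟨fun v w => ?_, ⟨0⟩⟩
  obtain ⟨mv, hmv⟩ := hR.2 v
  obtain ⟨mw, hmw⟩ := hR.2 w
  exact (walkTo hR mv v hmv).reachable.trans (walkTo hR mw w hmw).reachable.symm

lemma reach_invariant_aux [NeZero n] {p : Fin n → Fin n} {x v w : Fin n}
    (hpv : p v = w) (hne : s(v, w) ≠ s(x, p x)) :
    (∃ j, p^[j] v = x) → (∃ j, p^[j] w = x) := by
  rintro ⟨j, hj⟩
  cases j with
  | zero =>
    exfalso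
    apply hne
    simp only [Function.iterate_zero_apply] at hj
    subst hj
    rw [hpv]
  | succ j =>
    rw [Function.iterate_succ_apply, hpv] at hj
    exact ⟨j, hj⟩

lemma reach_invariant [NeZero n] {p : Fin n → Fin n} {x : Fin n} {v w : Fin n}
    (hadj : ((graphOf p) \ SimpleGraph.fromEdgeSet {s(x, p x)}).Adj v w) :
    (∃ j, p^[j] v = x) ↔ (∃ j, p^[j] w = x) := by
  obtain ⟨hadj1, hadj2⟩ := hadj
  simp only [SimpleGraph.fromEdgeSet_adj, Set.mem_singleton_iff, not_and] at hadj2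
  have hne : s(v, w) ≠ s(x, p x) := fun h => (hadj2 h) hadj1.ne
  rcases graphOf_adj.1 hadj1 with ⟨hvw, hpv | hpw⟩
  · constructor
    · exact reach_invariant_aux hpv hne
    · rintro ⟨j, hj⟩
      exact ⟨j + 1, by rwa [Function.iterate_succ_apply, hpv]⟩
  · constructor
    · rintro ⟨j, hj⟩
      exact ⟨j + 1, by rwa [Function.iterate_succ_apply, hpw]⟩
    · exact reach_invariant_aux hpw (by rwa [Sym2.eq_swap] at hne)

lemma reach_invariant_reachable [NeZero n] {p : Fin n → Fin n} {x : Fin n} {v w : Fin n}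
    (h : ((graphOf p) \ SimpleGraph.fromEdgeSet {s(x, p x)}).Reachable v w) :
    (∃ j, p^[j] v = x) ↔ (∃ j, p^[j] w = x) := by
  obtain ⟨W⟩ := h
  induction W with
  | nil => exact Iff.rfl
  | cons hadj _ ih => exact (reach_invariant hadj).trans ih

lemma acyclic_graphOf [NeZero n] {p : Fin n → Fin n} (hR : RootedAt (0 : Fin n) p) :
    (graphOf p).IsAcyclic := by
  rw [SimpleGraph.isAcyclic_iff_forall_adj_isBridge]
  have key : ∀ v : Fin n, v ≠ 0 → (graphOf p).IsBridge s(v, p v) := by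
    intro v hv
    rw [SimpleGraph.isBridge_iff]
    refine fun hreach => ?_
    have hiff := reach_invariant_reachable (x := v) hreach
    have h1 : ∃ j, p^[j] v = v := ⟨0, rfl⟩
    obtain ⟨j, hj⟩ := hiff.1 h1
    have : p^[j + 1] v = v := by rwa [Function.iterate_succ_apply]
    obtain ⟨r, hr⟩ := hR.2 v
    exact hv (hR.per_eq_root (by omega : 0 < j + 1) this hr)
  intro v w hadj
  rcases graphOf_adj.1 hadj with ⟨hvw, hpv | hpw⟩
  · have hv : v ≠ 0 := by
      rintro rfl
      rw [hR.1] at hpv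
      exact hvw hpv
    exact hpv ▸ key v hv
  · have hw : w ≠ 0 := by
      rintro rfl
      rw [hR.1] at hpw
      exact hvw hpw.symm
    rw [Sym2.eq_swap]
    exact hpw ▸ key w hw

lemma isTree_graphOf [NeZero n] {p : Fin n → Fin n} (hR : RootedAt (0 : Fin n) p) :
    (graphOf p).IsTree :=
  ⟨connected_graphOf hR, acyclic_graphOf hR⟩

end Trees

section Parent
open SimpleGraph
variable {n : ℕ} [NeZero n]

/-- The unique path from `v` to `0` in a tree. -/
noncomputable def pathTo (G : SimpleGraph (Fin n)) (hG : G.IsTree) (v : Fin n) :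
    G.Walk v 0 :=
  (hG.existsUnique_path v 0).choose

lemma pathTo_isPath (G : SimpleGraph (Fin n)) (hG : G.IsTree) (v : Fin n) :
    (pathTo G hG v).IsPath :=
  (hG.existsUnique_path v 0).choose_spec.1

lemma pathTo_unique (G : SimpleGraph (Fin n)) (hG : G.IsTree) {v : Fin n}
    (W : G.Walk v 0) (hW : W.IsPath) : W = pathTo G hG v :=
  (hG.existsUnique_path v 0).choose_spec.2 W hW

lemma pathTo_zero (G : SimpleGraph (Fin n)) (hG : G.IsTree) :
    pathTo G hG 0 = SimpleGraph.Walk.nil :=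
  (pathTo_unique G hG SimpleGraph.Walk.nil (SimpleGraph.Walk.IsPath.nil)).symm

noncomputable def parent (G : SimpleGraph (Fin n)) (hG : G.IsTree) (v : Fin n) : Fin n :=
  if v = 0 then 0 else (pathTo G hG v).getVert 1

lemma parent_zero (G : SimpleGraph (Fin n)) (hG : G.IsTree) : parent G hG 0 = 0 :=
  if_pos rfl

lemma parent_of_ne (G : SimpleGraph (Fin n)) (hG : G.IsTree) {v : Fin n} (hv : v ≠ 0) :
    parent G hG v = (pathTo G hG v).getVert 1 := if_neg hv

lemma pathTo_not_nil (G : SimpleGraph (Fin n)) (hG : G.IsTree) {v : Fin n} (hv : v ≠ 0) :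
    ¬ (pathTo G hG v).Nil :=
  SimpleGraph.Walk.not_nil_of_ne hv

lemma parent_adj (G : SimpleGraph (Fin n)) (hG : G.IsTree) {v : Fin n} (hv : v ≠ 0) :
    G.Adj v (parent G hG v) := by
  rw [parent_of_ne G hG hv]
  have hlen : 0 < (pathTo G hG v).length := by
    have := pathTo_not_nil G hG hv
    rw [SimpleGraph.Walk.nil_iff_length_eq] at this
    omega
  have := SimpleGraph.Walk.adj_getVert_succ (pathTo G hG v) hlen
  simpa using this

lemma pathTo_parent (G : SimpleGraph (Fin n)) (hG : G.IsTree) {v : Fin n} (hv : v ≠ 0) :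
    pathTo G hG (parent G hG v)
      = ((pathTo G hG v).tail).copy (parent_of_ne G hG hv).symm rfl := by
  refine (pathTo_unique G hG _ ?_).symm
  rw [SimpleGraph.Walk.isPath_copy]
  exact (pathTo_isPath G hG v).tail

lemma length_pathTo_parent (G : SimpleGraph (Fin n)) (hG : G.IsTree) {v : Fin n} (hv : v ≠ 0) :
    (pathTo G hG (parent G hG v)).length + 1 = (pathTo G hG v).length := by
  rw [pathTo_parent G hG hv, SimpleGraph.Walk.length_copy]
  exact SimpleGraph.Walk.length_tail_add_one (pathTo_not_nil G hG hv)

lemma parent_rooted (G : SimpleGraph (Fin n)) (hG : G.IsTree) :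
    RootedAt (0 : Fin n) (parent G hG) := by
  refine ⟨parent_zero G hG, fun v => ?_⟩
  refine ⟨(pathTo G hG v).length, ?_⟩
  generalize hL : (pathTo G hG v).length = L
  induction L generalizing v with
  | zero =>
    have : (pathTo G hG v).Nil := SimpleGraph.Walk.nil_iff_length_eq.2 hL
    have hv0 : v = 0 := this.eq
    simp [hv0]
  | succ L ih =>
    have hv : v ≠ 0 := by
      rintro rfl
      rw [pathTo_zero G hG] at hL
      simp at hL
    have hlen : (pathTo G hG (parent G hG v)).length = L := by
      have := length_pathTo_parent G hG hv
      omega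
    rw [Function.iterate_succ_apply]
    exact ih (parent G hG v) hlen

/-- Roundtrip A : parent of graphOf p is p. -/
lemma parent_graphOf {p : Fin n → Fin n} (hR : RootedAt (0 : Fin n) p) :
    parent (graphOf p) (isTree_graphOf hR) = p := by
  funext v
  by_cases hv : v = 0
  · rw [hv, parent_zero, hR.1]
  · obtain ⟨m, hm⟩ := hR.2 v
    have hm1 : m ≠ 0 := by
      rintro rfl
      exact hv hm
    obtain ⟨m', rfl⟩ : ∃ m', m = m' + 1 := ⟨m - 1, by omega⟩
    have hWp : walkTo hR (m' + 1) v hm = pathTo (graphOf p) (isTree_graphOf hR) v :=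
      pathTo_unique _ _ _ (isPath_walkTo hR _ _ _)
    rw [parent_of_ne _ _ hv, ← hWp, getVert1_walkTo hR m' v hm hv]

/-- Roundtrip B : graphOf of parent is the original tree. -/
lemma graphOf_parent (G : SimpleGraph (Fin n)) (hG : G.IsTree) :
    graphOf (parent G hG) = G := by
  ext v w
  rw [graphOf_adj]
  constructor
  · rintro ⟨hvw, hp | hp⟩
    · have hv : v ≠ 0 := by
        rintro rfl
        rw [parent_zero] at hp
        exact hvw hp
      exact hp ▸ parent_adj G hG hv
    · have hw : w ≠ 0 := by
        rintro rfl
        rw [parent_zero] at hp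
        exact hvw hp.symm
      exact hp ▸ (parent_adj G hG hw).symm
  · intro hadj
    refine ⟨hadj.ne, ?_⟩
    by_cases hw : w ∈ (pathTo G hG v).support
    · left
      have hv : v ≠ 0 := by
        rintro rfl
        rw [pathTo_zero] at hw
        simp only [SimpleGraph.Walk.support_nil, List.mem_cons, List.not_mem_nil, or_false] at hw
        exact hadj.ne hw.symm
      -- the segment from v to w is the single edge
      have hseg : (pathTo G hG v).takeUntil w hw = SimpleGraph.Walk.cons hadj SimpleGraph.Walk.nil := by
        have h1 : ((pathTo G hG v).takeUntil w hw).IsPath :=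
          (pathTo_isPath G hG v).takeUntil hw
        have h2 : (SimpleGraph.Walk.cons hadj SimpleGraph.Walk.nil : G.Walk v w).IsPath :=
          SimpleGraph.Path.singleton hadj |>.2
        have := hG.IsAcyclic.path_unique ⟨_, h1⟩ ⟨_, h2⟩
        exact congrArg Subtype.val this
      have hspec := (pathTo G hG v).take_spec hw
      rw [parent_of_ne G hG hv, ← hspec, hseg]
      simp [SimpleGraph.Walk.getVert_cons_succ]
    · right
      have hQ : (SimpleGraph.Walk.cons hadj.symm (pathTo G hG v)).IsPath :=
        (SimpleGraph.Walk.cons_isPath_iff _ _).2 ⟨pathTo_isPath G hG v, hw⟩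
      have hw0 : w ≠ 0 := by
        rintro rfl
        exact hw (SimpleGraph.Walk.end_mem_support _)
      have := pathTo_unique G hG _ hQ
      rw [parent_of_ne G hG hw0, ← this]
      simp [SimpleGraph.Walk.getVert_cons_succ]

noncomputable def treeEquiv (n : ℕ) [NeZero n] :
    {G : SimpleGraph (Fin n) // G.IsTree} ≃ {p : Fin n → Fin n // RootedAt (0 : Fin n) p} where
  toFun G := ⟨parent G.1 G.2, parent_rooted G.1 G.2⟩
  invFun p := ⟨graphOf p.1, isTree_graphOf p.2⟩
  left_inv := by
    rintro ⟨G, hG⟩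
    exact Subtype.ext (graphOf_parent G hG)
  right_inv := by
    rintro ⟨p, hR⟩
    exact Subtype.ext (parent_graphOf hR)

end Parent

end Cayley

open SimpleGraph

theorem cayley_formula (n : ℕ) (hn : 1 ≤ n) :
    Nat.card {G : SimpleGraph (Fin n) // G.IsTree} = n ^ (n - 2) := by
  haveI : NeZero n := ⟨by omega⟩
  rw [Nat.card_congr (Cayley.treeEquiv n)]
  exact Cayley.card_rootedAt_zero n
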